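/- Let f ∈ C¹[0,1] (continuously differentiable) and let A ⊆ [0,1] be a set on which f is convex. Then there exists a set B ⊆ [0,1] such that f' restricted to B is monotone increasing and dim_H B ≥ dim_H A, lower Minkowski dimension of B ≥ lower Minkowski dimension of A, and upper Minkowski dimension of B ≥ upper Minkowski dimension of A. -/

import Mathlib

open Set MeasureTheory

/-- Number of dyadic grid intervals `[(j-1)/2^ℓ, j/2^ℓ]` meeting `A`. -/
noncomputable def gridCount (ℓ : ℕ) (A : Set ℝ) : ℕ :=
  Set.ncard {j : ℤ | (A ∩ Icc (((j : ℝ) - 1) / 2 ^ ℓ) ((j : ℝ) / 2 ^ ℓ)).Nonempty}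

/-- Lower Minkowski (box) dimension via dyadic grid counts. -/
noncomputable def lowerMinkowskiDim (A : Set ℝ) : ℝ :=
  Filter.liminf (fun ℓ : ℕ => Real.log (gridCount ℓ A) / (ℓ * Real.log 2)) Filter.atTop

/-- Upper Minkowski (box) dimension via dyadic grid counts. -/
noncomputable def upperMinkowskiDim (A : Set ℝ) : ℝ :=
  Filter.limsup (fun ℓ : ℕ => Real.log (gridCount ℓ A) / (ℓ * Real.log 2)) Filter.atTop

namespace ConvexDimAux

open Filter Topology

noncomputable def slp (f : ℝ → ℝ) (a b : ℝ) : ℝ := (f b - f a) / (b - a)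

lemma slp_comm (f : ℝ → ℝ) (a b : ℝ) : slp f a b = slp f b a := by
  unfold slp
  rcases eq_or_ne a b with rfl | h
  · rfl
  · rw [div_eq_div_iff (sub_ne_zero.2 (Ne.symm h)) (sub_ne_zero.2 h)]; ring

lemma mem_closure_inter {s t : Set ℝ} {x : ℝ} (hx : x ∈ closure s) (ht : t ∈ 𝓝 x) :
    x ∈ closure (s ∩ t) := by
  rw [mem_closure_iff_nhdsWithin_neBot] at hx ⊢
  rw [nhdsWithin_inter']
  rw [inf_of_le_left (le_principal_iff.2 (nhdsWithin_le_nhds ht))]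
  exact hx

lemma tendsto_slp_left (f : ℝ → ℝ) (hfc : ContinuousOn f (Icc 0 1)) {b x : ℝ}
    (hx : x ∈ Icc (0:ℝ) 1) (hne : x ≠ b) {s : Set ℝ} (hs : s ⊆ Icc 0 1) :
    Tendsto (fun a => slp f a b) (𝓝[s] x) (𝓝 (slp f x b)) := by
  have hf : Tendsto f (𝓝[s] x) (𝓝 (f x)) := (hfc x hx).mono hs
  have hid : Tendsto (fun a : ℝ => a) (𝓝[s] x) (𝓝 x) :=
    tendsto_id.mono_left nhdsWithin_le_nhds
  exact (tendsto_const_nhds.sub hf).div (tendsto_const_nhds.sub hid)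
    (sub_ne_zero.2 (Ne.symm hne))

lemma slope_mono_closure (f : ℝ → ℝ) (hfc : ContinuousOn f (Icc 0 1))
    (A : Set ℝ) (hA : A ⊆ Icc (0:ℝ) 1)
    (h : ∀ a ∈ A, ∀ b ∈ A, ∀ c ∈ A, a < b → b < c → slp f a b ≤ slp f b c) :
    ∀ a ∈ closure A, ∀ b ∈ closure A, ∀ c ∈ closure A, a < b → b < c →
      slp f a b ≤ slp f b c := by
  have hA' : closure A ⊆ Icc (0:ℝ) 1 := closure_minimal hA isClosed_Icc
  have h1 : ∀ b ∈ A, ∀ c ∈ A, ∀ a ∈ closure A, a < b → b < c → slp f a b ≤ slp f b c := by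
    intro b hb c hc a ha hab hbc
    haveI hne : (𝓝[A ∩ Iio b] a).NeBot := by
      rw [← mem_closure_iff_nhdsWithin_neBot]
      exact mem_closure_inter ha (Iio_mem_nhds hab)
    have ht : Tendsto (fun a' => slp f a' b) (𝓝[A ∩ Iio b] a) (𝓝 (slp f a b)) :=
      tendsto_slp_left f hfc (hA' ha) hab.ne (fun x hx => hA hx.1)
    refine le_of_tendsto ht (eventually_of_mem self_mem_nhdsWithin ?_)
    intro a' ha'
    exact h a' ha'.1 b hb c hc ha'.2 hbc
  have h2 : ∀ b ∈ A, ∀ a ∈ closure A, ∀ c ∈ closure A, a < b → b < c →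
      slp f a b ≤ slp f b c := by
    intro b hb a ha c hc hab hbc
    haveI hne : (𝓝[A ∩ Ioi b] c).NeBot := by
      rw [← mem_closure_iff_nhdsWithin_neBot]
      exact mem_closure_inter hc (Ioi_mem_nhds hbc)
    have ht : Tendsto (fun c' => slp f b c') (𝓝[A ∩ Ioi b] c) (𝓝 (slp f b c)) := by
      have h0 : Tendsto (fun c' => slp f c' b) (𝓝[A ∩ Ioi b] c) (𝓝 (slp f c b)) :=
        tendsto_slp_left f hfc (hA' hc) hbc.ne' (fun x hx => hA hx.1)
      have e1 : (fun c' => slp f c' b) = fun c' => slp f b c' :=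
        funext fun c' => slp_comm f c' b
      rw [e1, slp_comm f c b] at h0
      exact h0
    refine ge_of_tendsto ht (eventually_of_mem self_mem_nhdsWithin ?_)
    intro c' hc'
    exact h1 b hb c' hc'.1 a ha hab hc'.2
  intro a ha b hb c hc hab hbc
  haveI hne : (𝓝[A ∩ Ioo a c] b).NeBot := by
    rw [← mem_closure_iff_nhdsWithin_neBot]
    exact mem_closure_inter hb (Ioo_mem_nhds hab hbc)
  have t1 : Tendsto (fun b' => slp f a b') (𝓝[A ∩ Ioo a c] b) (𝓝 (slp f a b)) := by
    have h0 : Tendsto (fun b' => slp f b' a) (𝓝[A ∩ Ioo a c] b) (𝓝 (slp f b a)) :=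
      tendsto_slp_left f hfc (hA' hb) hab.ne' (fun x hx => hA hx.1)
    have e1 : (fun b' => slp f b' a) = fun b' => slp f a b' :=
      funext fun b' => slp_comm f b' a
    rw [e1, slp_comm f b a] at h0
    exact h0
  have t2 : Tendsto (fun b' => slp f b' c) (𝓝[A ∩ Ioo a c] b) (𝓝 (slp f b c)) :=
    tendsto_slp_left f hfc (hA' hb) hbc.ne (fun x hx => hA hx.1)
  refine le_of_tendsto_of_tendsto t1 t2 (eventually_of_mem self_mem_nhdsWithin ?_)
  intro b' hb'
  exact h2 b' hb'.1 a ha c hc hb'.2.1 hb'.2.2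

lemma slp_left_le (f : ℝ → ℝ) {a b c : ℝ} (hab : a < b) (hbc : b < c)
    (h : slp f a b ≤ slp f b c) : slp f a b ≤ slp f a c ∧ slp f a c ≤ slp f b c := by
  have h1 : (0:ℝ) < b - a := by linarith
  have h2 : (0:ℝ) < c - b := by linarith
  have h3 : (0:ℝ) < c - a := by linarith
  have key : (c - a) * slp f a c = (b - a) * slp f a b + (c - b) * slp f b c := by
    unfold slp
    field_simp
    ring
  constructor
  · have e1 : (c - b) * slp f a b ≤ (c - b) * slp f b c := by
      exact mul_le_mul_of_nonneg_left h h2.le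
    have : (c - a) * slp f a b ≤ (c - a) * slp f a c := by nlinarith
    exact le_of_mul_le_mul_left this h3
  · have e2 : (b - a) * slp f a b ≤ (b - a) * slp f b c := by
      exact mul_le_mul_of_nonneg_left h h1.le
    have : (c - a) * slp f a c ≤ (c - a) * slp f b c := by nlinarith
    exact le_of_mul_le_mul_left this h3

lemma acc_split {K : Set ℝ} {x : ℝ} (h : x ∈ closure (K \ {x})) :
    x ∈ closure (K ∩ Iio x) ∨ x ∈ closure (K ∩ Ioi x) := by
  have e : K \ {x} = (K ∩ Iio x) ∪ (K ∩ Ioi x) := by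
    ext z
    simp only [mem_diff, mem_singleton_iff, mem_union, mem_inter_iff, mem_Iio, mem_Ioi]
    constructor
    · rintro ⟨hz, hne⟩
      rcases lt_or_gt_of_ne hne with h' | h'
      · exact Or.inl ⟨hz, h'⟩
      · exact Or.inr ⟨hz, h'⟩
    · rintro (⟨hz, h'⟩ | ⟨hz, h'⟩)
      · exact ⟨hz, ne_of_lt h'⟩
      · exact ⟨hz, ne_of_gt h'⟩
  rw [e, closure_union] at h
  exact h

lemma slope_eq_slp (f : ℝ → ℝ) (x : ℝ) : slope f x = slp f x := by
  funext b
  rw [slope_def_field, slp]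

lemma deriv_le_slope (f f' : ℝ → ℝ)
    (hderiv : ∀ x ∈ Icc (0:ℝ) 1, HasDerivWithinAt f (f' x) (Icc 0 1) x)
    {K : Set ℝ} (hK : K ⊆ Icc 0 1)
    (hsl : ∀ a ∈ K, ∀ b ∈ K, ∀ c ∈ K, a < b → b < c → slp f a b ≤ slp f b c)
    {x y : ℝ} (hx : x ∈ K) (hacc : x ∈ closure (K \ {x})) (hy : y ∈ K) (hxy : x < y) :
    f' x ≤ slp f x y := by
  have hx' := hK hx
  have hslope : Tendsto (slp f x) (𝓝[Icc 0 1 \ {x}] x) (𝓝 (f' x)) := by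
    have := hasDerivWithinAt_iff_tendsto_slope.1 (hderiv x hx')
    rwa [slope_eq_slp] at this
  rcases acc_split hacc with hl | hr
  · haveI : (𝓝[K ∩ Iio x] x).NeBot := mem_closure_iff_nhdsWithin_neBot.1 hl
    have hmono : 𝓝[K ∩ Iio x] x ≤ 𝓝[Icc 0 1 \ {x}] x := by
      apply nhdsWithin_mono
      intro z hz
      exact ⟨hK hz.1, ne_of_lt hz.2⟩
    have ht : Tendsto (slp f x) (𝓝[K ∩ Iio x] x) (𝓝 (f' x)) := hslope.mono_left hmono
    refine le_of_tendsto ht (eventually_of_mem self_mem_nhdsWithin ?_)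
    intro a ha
    rw [slp_comm f x a]
    exact hsl a ha.1 x hx y hy ha.2 hxy
  · haveI : (𝓝[K ∩ Ioi x] x).NeBot := mem_closure_iff_nhdsWithin_neBot.1 hr
    have hmono : 𝓝[K ∩ Ioi x] x ≤ 𝓝[Icc 0 1 \ {x}] x := by
      apply nhdsWithin_mono
      intro z hz
      exact ⟨hK hz.1, ne_of_gt hz.2⟩
    have ht : Tendsto (slp f x) (𝓝[K ∩ Ioi x] x) (𝓝 (f' x)) := hslope.mono_left hmono
    have hev : ∀ᶠ b in 𝓝[K ∩ Ioi x] x, b < y :=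
      eventually_nhdsWithin_of_eventually_nhds (Filter.Tendsto.eventually_lt_const hxy tendsto_id)
    refine le_of_tendsto ht ((eventually_of_mem self_mem_nhdsWithin fun b hb => hb).and hev
      |>.mono ?_)
    rintro b ⟨hb, hby⟩
    exact (slp_left_le f hb.2 hby (hsl x hx b hb.1 y hy hb.2 hby)).1

lemma slope_le_deriv (f f' : ℝ → ℝ)
    (hderiv : ∀ x ∈ Icc (0:ℝ) 1, HasDerivWithinAt f (f' x) (Icc 0 1) x)
    {K : Set ℝ} (hK : K ⊆ Icc 0 1)
    (hsl : ∀ a ∈ K, ∀ b ∈ K, ∀ c ∈ K, a < b → b < c → slp f a b ≤ slp f b c)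
    {x y : ℝ} (hx : x ∈ K) (hy : y ∈ K) (hacc : y ∈ closure (K \ {y})) (hxy : x < y) :
    slp f x y ≤ f' y := by
  have hy' := hK hy
  have hslope : Tendsto (slp f y) (𝓝[Icc 0 1 \ {y}] y) (𝓝 (f' y)) := by
    have := hasDerivWithinAt_iff_tendsto_slope.1 (hderiv y hy')
    rwa [slope_eq_slp] at this
  rcases acc_split hacc with hl | hr
  · haveI : (𝓝[K ∩ Iio y] y).NeBot := mem_closure_iff_nhdsWithin_neBot.1 hl
    have hmono : 𝓝[K ∩ Iio y] y ≤ 𝓝[Icc 0 1 \ {y}] y := by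
      apply nhdsWithin_mono
      intro z hz
      exact ⟨hK hz.1, ne_of_lt hz.2⟩
    have ht : Tendsto (slp f y) (𝓝[K ∩ Iio y] y) (𝓝 (f' y)) := hslope.mono_left hmono
    have hev : ∀ᶠ b in 𝓝[K ∩ Iio y] y, x < b :=
      eventually_nhdsWithin_of_eventually_nhds (Filter.Tendsto.eventually_const_lt hxy tendsto_id)
    refine ge_of_tendsto ht ((eventually_of_mem self_mem_nhdsWithin fun b hb => hb).and hev
      |>.mono ?_)
    rintro b ⟨hb, hxb⟩
    rw [slp_comm f y b]
    exact (slp_left_le f hxb hb.2 (hsl x hx b hb.1 y hy hxb hb.2)).2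
  · haveI : (𝓝[K ∩ Ioi y] y).NeBot := mem_closure_iff_nhdsWithin_neBot.1 hr
    have hmono : 𝓝[K ∩ Ioi y] y ≤ 𝓝[Icc 0 1 \ {y}] y := by
      apply nhdsWithin_mono
      intro z hz
      exact ⟨hK hz.1, ne_of_gt hz.2⟩
    have ht : Tendsto (slp f y) (𝓝[K ∩ Ioi y] y) (𝓝 (f' y)) := hslope.mono_left hmono
    refine ge_of_tendsto ht (eventually_of_mem self_mem_nhdsWithin ?_)
    intro b hb
    exact hsl x hx y hy b hb.1 hxy hb.2

def gridI (ℓ : ℕ) (j : ℤ) : Set ℝ := Icc (((j:ℝ) - 1) / 2 ^ ℓ) ((j:ℝ) / 2 ^ ℓ)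

def Sg (ℓ : ℕ) (X : Set ℝ) : Set ℤ := {j | (X ∩ gridI ℓ j).Nonempty}

lemma gridCount_eq (ℓ : ℕ) (X : Set ℝ) : gridCount ℓ X = (Sg ℓ X).ncard := rfl

lemma two_pow_pos (ℓ : ℕ) : (0:ℝ) < 2 ^ ℓ := by positivity

lemma mem_gridI_iff {ℓ : ℕ} {x : ℝ} {j : ℤ} :
    x ∈ gridI ℓ j ↔ (j:ℝ) - 1 ≤ x * 2 ^ ℓ ∧ x * 2 ^ ℓ ≤ j := by
  rw [gridI, mem_Icc, div_le_iff₀ (two_pow_pos ℓ), le_div_iff₀ (two_pow_pos ℓ)]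

lemma ceil_mem_gridI (ℓ : ℕ) (x : ℝ) : x ∈ gridI ℓ ⌈x * 2 ^ ℓ⌉ := by
  rw [mem_gridI_iff]
  constructor
  · have := Int.ceil_lt_add_one (x * 2 ^ ℓ)
    linarith
  · exact Int.le_ceil _

lemma mem_gridI_cases {ℓ : ℕ} {x : ℝ} {j : ℤ} (h : x ∈ gridI ℓ j) :
    j = ⌈x * 2 ^ ℓ⌉ ∨ j = ⌈x * 2 ^ ℓ⌉ + 1 := by
  obtain ⟨h1, h2⟩ := mem_gridI_iff.1 h
  have hj1 : ⌈x * 2 ^ ℓ⌉ ≤ j := Int.ceil_le.2 h2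
  have hj2 : j - 1 ≤ ⌈x * 2 ^ ℓ⌉ := by
    have h3 : ((j - 1 : ℤ):ℝ) ≤ ((⌈x * 2 ^ ℓ⌉ : ℤ) : ℝ) := by
      push_cast
      linarith [h1.trans (Int.le_ceil (x * 2 ^ ℓ))]
    exact_mod_cast h3
  omega

lemma Sg_subset_Icc {ℓ : ℕ} {X : Set ℝ} (hX : X ⊆ Icc 0 1) :
    Sg ℓ X ⊆ Icc (0:ℤ) (2 ^ ℓ + 1) := by
  rintro j ⟨x, hxX, hxj⟩
  obtain ⟨h1, h2⟩ := mem_gridI_iff.1 hxj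
  obtain ⟨hx0, hx1⟩ := hX hxX
  have hb1 : (0:ℝ) ≤ x * 2 ^ ℓ := mul_nonneg hx0 (two_pow_pos ℓ).le
  have hb2 : x * 2 ^ ℓ ≤ 2 ^ ℓ := by
    nlinarith [two_pow_pos ℓ]
  constructor
  · exact_mod_cast le_trans hb1 h2
  · have h3 : ((j : ℤ):ℝ) ≤ (((2:ℤ) ^ ℓ + 1 : ℤ) : ℝ) := by
      push_cast
      linarith
    exact_mod_cast h3

lemma Sg_finite {ℓ : ℕ} {X : Set ℝ} (hX : X ⊆ Icc 0 1) : (Sg ℓ X).Finite :=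
  (Set.finite_Icc _ _).subset (Sg_subset_Icc hX)

lemma gridCount_mono {ℓ : ℕ} {X Y : Set ℝ} (hXY : X ⊆ Y) (hY : Y ⊆ Icc 0 1) :
    gridCount ℓ X ≤ gridCount ℓ Y := by
  rw [gridCount_eq, gridCount_eq]
  refine Set.ncard_le_ncard ?_ (Sg_finite hY)
  rintro j ⟨x, hx, hxj⟩
  exact ⟨x, hXY hx, hxj⟩

lemma gridCount_le (ℓ : ℕ) {X : Set ℝ} (hX : X ⊆ Icc 0 1) :
    (gridCount ℓ X : ℝ) ≤ 2 ^ ℓ + 2 := by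
  have h1 : gridCount ℓ X ≤ (Set.Icc (0:ℤ) (2 ^ ℓ + 1)).ncard := by
    rw [gridCount_eq]
    exact Set.ncard_le_ncard (Sg_subset_Icc hX) (Set.finite_Icc _ _)
  have h2 : (Set.Icc (0:ℤ) (2 ^ ℓ + 1)).ncard = (2 ^ ℓ + 2 : ℤ).toNat := by
    rw [← Finset.coe_Icc, Set.ncard_coe_finset, Int.card_Icc]
    congr 1
  calc (gridCount ℓ X : ℝ) ≤ (((2 ^ ℓ + 2 : ℤ).toNat : ℕ) : ℝ) := by exact_mod_cast h1.trans_eq h2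
    _ = 2 ^ ℓ + 2 := by
        have h3 : (((2 ^ ℓ + 2 : ℤ).toNat : ℤ) : ℝ) = ((2 ^ ℓ + 2 : ℤ) : ℝ) := by
          rw [Int.toNat_of_nonneg (by positivity)]
        push_cast at h3 ⊢
        linarith

lemma gridCount_pos {ℓ : ℕ} {X : Set ℝ} (hX : X.Nonempty) (hX' : X ⊆ Icc 0 1) :
    1 ≤ gridCount ℓ X := by
  obtain ⟨x, hx⟩ := hX
  rw [gridCount_eq]
  have hmem : ⌈x * 2 ^ ℓ⌉ ∈ Sg ℓ X := ⟨x, hx, ceil_mem_gridI ℓ x⟩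
  have hpos : 0 < (Sg ℓ X).ncard := (Set.ncard_pos (Sg_finite hX')).2 ⟨_, hmem⟩
  omega


lemma count_bound {K B : Set ℝ} (hK : K ⊆ Icc 0 1) (hB : B ⊆ Icc 0 1)
    (hgap : ∀ x ∈ K, x ∉ B → x ≠ sSup K →
      ∃ ξ ∈ B, x < ξ ∧ Ioc x ξ ∩ K = ∅) (ℓ : ℕ) :
    gridCount ℓ K ≤ 3 * gridCount ℓ B + 2 := by
  classical
  set M := sSup K with hM
  have hfinK : (Sg ℓ K).Finite := Sg_finite hK
  have hfinB : (Sg ℓ B).Finite := Sg_finite hB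
  set bad : Set ℤ := {j | j ∈ Sg ℓ K ∧ j ∉ Sg ℓ B ∧ M ∉ gridI ℓ j} with hbaddef
  have hbadfin : bad.Finite := hfinK.subset (fun j hj => hj.1)
  have hcover : (Sg ℓ K).ncard ≤ (Sg ℓ B).ncard + 2 + bad.ncard := by
    have hsub : Sg ℓ K ⊆ (Sg ℓ B ∪ {⌈M * 2 ^ ℓ⌉, ⌈M * 2 ^ ℓ⌉ + 1}) ∪ bad := by
      intro j hj
      by_cases h1 : j ∈ Sg ℓ B
      · exact Or.inl (Or.inl h1)
      by_cases h2 : M ∈ gridI ℓ j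
      · refine Or.inl (Or.inr ?_)
        rcases mem_gridI_cases h2 with h | h <;> simp [h]
      · exact Or.inr ⟨hj, h1, h2⟩
    have hpairfin : ({⌈M * 2 ^ ℓ⌉, ⌈M * 2 ^ ℓ⌉ + 1} : Set ℤ).Finite := by
      exact (Set.finite_singleton _).insert _
    have h1 : (Sg ℓ K).ncard ≤ ((Sg ℓ B ∪ {⌈M * 2 ^ ℓ⌉, ⌈M * 2 ^ ℓ⌉ + 1}) ∪ bad).ncard :=
      Set.ncard_le_ncard hsub (((hfinB.union hpairfin).union hbadfin))
    have h2 := Set.ncard_union_le (Sg ℓ B ∪ {⌈M * 2 ^ ℓ⌉, ⌈M * 2 ^ ℓ⌉ + 1}) bad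
    have h3 := Set.ncard_union_le (Sg ℓ B) ({⌈M * 2 ^ ℓ⌉, ⌈M * 2 ^ ℓ⌉ + 1} : Set ℤ)
    have h4 : ({⌈M * 2 ^ ℓ⌉, ⌈M * 2 ^ ℓ⌉ + 1} : Set ℤ).ncard ≤ 2 := by
      refine (Set.ncard_insert_le _ _).trans ?_
      simp
    omega
  have key : ∀ j, j ∈ bad → ∃ p : ℝ × ℝ, p.1 ∈ K ∧ p.1 ∈ gridI ℓ j ∧ p.2 ∈ B ∧
      p.1 < p.2 ∧ Ioc p.1 p.2 ∩ K = ∅ := by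
    rintro j ⟨⟨x, hxK, hxj⟩, hjB, hjM⟩
    have hxB : x ∉ B := fun hxB => hjB ⟨x, hxB, hxj⟩
    have hxM : x ≠ M := fun h => hjM (h ▸ hxj)
    obtain ⟨ξ, hξB, hxξ, hdis⟩ := hgap x hxK hxB hxM
    exact ⟨(x, ξ), hxK, hxj, hξB, hxξ, hdis⟩
  choose w hw1 hw2 hw3 hw4 hw5 using key
  let φ : ℤ → ℤ := fun j => if h : j ∈ bad then ⌈(w j h).2 * 2 ^ ℓ⌉ else 0
  have hφval : ∀ j (h : j ∈ bad), φ j = ⌈(w j h).2 * 2 ^ ℓ⌉ := by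
    intro j h
    simp only [φ, dif_pos h]
  have hφmem : ∀ j (h : j ∈ bad), φ j ∈ Sg ℓ B := by
    intro j h
    rw [hφval j h]
    exact ⟨(w j h).2, hw3 j h, ceil_mem_gridI ℓ _⟩
  have hpair : ∀ j (hj : j ∈ bad), ∀ j' (hj' : j' ∈ bad), φ j = φ j' → j < j' → j' = j + 1 := by
    intro j hj j' hj' hφeq hlt
    obtain ⟨hx1, hx2⟩ := mem_gridI_iff.1 (hw2 j hj)
    obtain ⟨hx1', hx2'⟩ := mem_gridI_iff.1 (hw2 j' hj')
    have hxx' : (w j hj).1 ≤ (w j' hj').1 := by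
      have hjj : (j:ℝ) ≤ (j':ℝ) - 1 := by
        have h5 : (j:ℤ) ≤ j' - 1 := by omega
        have h6 : ((j:ℤ):ℝ) ≤ ((j' - 1 : ℤ):ℝ) := by exact_mod_cast h5
        push_cast at h6
        linarith
      have hmul : (w j hj).1 * 2 ^ ℓ ≤ (w j' hj').1 * 2 ^ ℓ := by linarith
      exact le_of_mul_le_mul_right hmul (two_pow_pos ℓ)
    rcases eq_or_lt_of_le hxx' with heq | hltx
    · have c1 := mem_gridI_cases (hw2 j hj)
      have hx'm := hw2 j' hj'
      rw [← heq] at hx'm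
      have c2 := mem_gridI_cases hx'm
      omega
    · exfalso
      have hx'notin : (w j' hj').1 ∉ Ioc (w j hj).1 (w j hj).2 := by
        intro hmem
        have : (w j' hj').1 ∈ Ioc (w j hj).1 (w j hj).2 ∩ K := ⟨hmem, hw1 j' hj'⟩
        rw [hw5 j hj] at this
        exact this
      have hξx' : (w j hj).2 < (w j' hj').1 := by
        rcases le_or_gt (w j' hj').1 (w j hj).2 with h | h
        · exact absurd ⟨hltx, h⟩ hx'notin
        · exact h
      have hk : ⌈(w j hj).2 * 2 ^ ℓ⌉ = ⌈(w j' hj').2 * 2 ^ ℓ⌉ := by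
        rw [← hφval j hj, ← hφval j' hj', hφeq]
      set k := ⌈(w j' hj').2 * 2 ^ ℓ⌉ with hkdef
      have b1 : (k:ℝ) - 1 < (w j hj).2 * 2 ^ ℓ := by
        rw [← hk]
        have := Int.ceil_lt_add_one ((w j hj).2 * 2 ^ ℓ)
        push_cast at this ⊢
        linarith
      have b2 : (w j' hj').2 * 2 ^ ℓ ≤ (k:ℝ) := Int.le_ceil _
      have hxk1 : (k:ℝ) - 1 < (w j' hj').1 * 2 ^ ℓ := by
        have : (w j hj).2 * 2 ^ ℓ ≤ (w j' hj').1 * 2 ^ ℓ := by nlinarith [two_pow_pos ℓ]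
        linarith
      have hxk2 : (w j' hj').1 * 2 ^ ℓ < (k:ℝ) := by
        have := hw4 j' hj'
        nlinarith [two_pow_pos ℓ]
      have e1 : j' ≤ k := by
        have h5 : (j':ℝ) - 1 < (k:ℝ) := lt_of_le_of_lt hx1' hxk2
        have h6 : ((j' - 1 : ℤ) : ℝ) < ((k : ℤ) : ℝ) := by push_cast; linarith
        have h7 : (j' : ℤ) - 1 < k := by exact_mod_cast h6
        omega
      have e2 : k ≤ j' := by
        have h5 : (k:ℝ) - 1 < (j':ℝ) := lt_of_lt_of_le hxk1 hx2'
        have h6 : ((k - 1 : ℤ) : ℝ) < ((j' : ℤ) : ℝ) := by push_cast; linarith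
        have h7 : (k : ℤ) - 1 < j' := by exact_mod_cast h6
        omega
      have hj'k : j' = k := le_antisymm e1 e2
      apply hj'.2.1
      refine ⟨(w j' hj').2, hw3 j' hj', ?_⟩
      have hgeq : gridI ℓ j' = gridI ℓ ⌈(w j' hj').2 * 2 ^ ℓ⌉ :=
        congrArg (gridI ℓ) (hj'k.trans hkdef)
      rw [hgeq]
      exact ceil_mem_gridI ℓ _
  have hbadcard : bad.ncard ≤ 2 * (Sg ℓ B).ncard := by
    set bf := hbadfin.toFinset with hbf
    have hbfmem : ∀ j, j ∈ bf ↔ j ∈ bad := fun j => hbadfin.mem_toFinset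
    have hmain : bf.card ≤ 2 * (bf.image φ).card := by
      apply Finset.card_le_mul_card_image
      intro k _
      rcases Finset.eq_empty_or_nonempty (bf.filter (fun j => φ j = k)) with he | hne
      · rw [he]
        simp
      · set s := bf.filter (fun j => φ j = k) with hs
        set j₀ := s.min' hne with hj₀
        have hj₀s : j₀ ∈ s := s.min'_mem hne
        have hsub2 : s ⊆ {j₀, j₀ + 1} := by
          intro j hjs
          have hmin := s.min'_le j hjs
          rcases eq_or_lt_of_le hmin with h | h
          · simp [← h, hj₀]
          · have hj' : j = j₀ + 1 := by
              apply hpair j₀ ((hbfmem _).1 (Finset.mem_filter.1 hj₀s).1) j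
                ((hbfmem _).1 (Finset.mem_filter.1 hjs).1) ?_ h
              rw [(Finset.mem_filter.1 hj₀s).2, (Finset.mem_filter.1 hjs).2]
            simp [hj']
        calc s.card ≤ ({j₀, j₀ + 1} : Finset ℤ).card := Finset.card_le_card hsub2
          _ ≤ 2 := (Finset.card_insert_le _ _).trans (by simp)
    have himg : (bf.image φ) ⊆ hfinB.toFinset := by
      intro k hk
      obtain ⟨j, hj, rfl⟩ := Finset.mem_image.1 hk
      exact hfinB.mem_toFinset.2 (hφmem j ((hbfmem j).1 hj))
    have hfin2 := Finset.card_le_card himg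
    have e1 : bad.ncard = bf.card := Set.ncard_eq_toFinset_card bad hbadfin
    have e2 : (Sg ℓ B).ncard = hfinB.toFinset.card := Set.ncard_eq_toFinset_card _ hfinB
    omega
  rw [gridCount_eq, gridCount_eq]
  omega

lemma right_gap {K : Set ℝ} (hKc : IsClosed K) {x : ℝ} (hx : x ∈ K)
    (hiso : x ∉ closure (K \ {x})) {y : ℝ} (hy : y ∈ K) (hxy : x < y) :
    ∃ d ∈ K, x < d ∧ Ioo x d ∩ K = ∅ := by
  set S := K ∩ Ioi x with hS
  have hSne : S.Nonempty := ⟨y, hy, hxy⟩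
  have hSbdd : BddBelow S := ⟨x, fun z hz => hz.2.le⟩
  set d := sInf S with hd
  have hdS : d ∈ closure S := csInf_mem_closure hSne hSbdd
  have hdK : d ∈ K := by
    have hsub : closure S ⊆ K := by
      calc closure S ⊆ closure K := closure_mono inter_subset_left
        _ = K := hKc.closure_eq
    exact hsub hdS
  have hdx : x ≤ d := le_csInf hSne (fun z hz => hz.2.le)
  have hdx' : x < d := by
    rcases eq_or_lt_of_le hdx with heq | h
    · exfalso
      apply hiso
      have hsub : S ⊆ K \ {x} := fun z hz => ⟨hz.1, ne_of_gt hz.2⟩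
      have h9 := closure_mono hsub hdS
      rwa [← heq] at h9
    · exact h
  refine ⟨d, hdK, hdx', ?_⟩
  ext z
  simp only [mem_inter_iff, mem_Ioo, mem_empty_iff_false, iff_false, not_and]
  rintro ⟨hz1, hz2⟩ hzK
  exact absurd (csInf_le hSbdd ⟨hzK, hz1⟩) (not_le.2 hz2)

lemma gap_mvt (f f' : ℝ → ℝ)
    (hderiv : ∀ x ∈ Icc (0:ℝ) 1, HasDerivWithinAt f (f' x) (Icc 0 1) x)
    {c d : ℝ} (hc : c ∈ Icc (0:ℝ) 1) (hd : d ∈ Icc (0:ℝ) 1) (hcd : c < d) :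
    ∃ ξ ∈ Ioo c d, f' ξ = slp f c d := by
  have h0 : ContinuousOn f (Icc (0:ℝ) 1) := fun x hx => (hderiv x hx).continuousWithinAt
  have hcont : ContinuousOn f (Icc c d) := h0.mono (Icc_subset_Icc hc.1 hd.2)
  have hd' : ∀ z ∈ Ioo c d, HasDerivAt f (f' z) z := by
    intro z hz
    have hz1 : (0:ℝ) < z := lt_of_le_of_lt hc.1 hz.1
    have hz2 : z < 1 := lt_of_lt_of_le hz.2 hd.2
    have hzI : z ∈ Icc (0:ℝ) 1 := ⟨hz1.le, hz2.le⟩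
    exact (hderiv z hzI).hasDerivAt (Icc_mem_nhds hz1 hz2)
  obtain ⟨ξ, hξ, he⟩ := exists_hasDerivAt_eq_slope f f' hcd hcont hd'
  exact ⟨ξ, hξ, he⟩

lemma seq_dims_le (N M : ℕ → ℕ)
    (hub : ∀ ℓ : ℕ, (N ℓ : ℝ) ≤ 2 ^ ℓ + 2)
    (hvb : ∀ ℓ : ℕ, (M ℓ : ℝ) ≤ 2 ^ ℓ + 2)
    (hc : ∀ ℓ, N ℓ ≤ 5 * M ℓ)
    (hb : ∀ ℓ, 1 ≤ M ℓ) :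
    Filter.liminf (fun ℓ : ℕ => Real.log (N ℓ) / (ℓ * Real.log 2)) Filter.atTop ≤
      Filter.liminf (fun ℓ : ℕ => Real.log (M ℓ) / (ℓ * Real.log 2)) Filter.atTop ∧
    Filter.limsup (fun ℓ : ℕ => Real.log (N ℓ) / (ℓ * Real.log 2)) Filter.atTop ≤
      Filter.limsup (fun ℓ : ℕ => Real.log (M ℓ) / (ℓ * Real.log 2)) Filter.atTop := by
  have hlog2 : (0:ℝ) < Real.log 2 := Real.log_pos (by norm_num)
  have hbound : ∀ (P : ℕ → ℕ), (∀ ℓ : ℕ, (P ℓ : ℝ) ≤ 2 ^ ℓ + 2) →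
      ∀ ℓ : ℕ, Real.log (P ℓ) / (ℓ * Real.log 2) ≤ 3 := by
    intro P hP ℓ
    rcases Nat.eq_zero_or_pos ℓ with rfl | hℓ
    · simp
    have hden : (0:ℝ) < ℓ * Real.log 2 := by
      apply mul_pos _ hlog2
      exact_mod_cast hℓ
    rw [div_le_iff₀ hden]
    have h1 : Real.log (P ℓ) ≤ ((ℓ:ℝ) + 2) * Real.log 2 := by
      rcases Nat.eq_zero_or_pos (P ℓ) with h | h
      · rw [h]
        push_cast
        rw [Real.log_zero]
        positivity
      · have h2 : (P ℓ : ℝ) ≤ 2 ^ (ℓ + 2) := by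
          have he : (2:ℝ) ^ (ℓ + 2) = 4 * 2 ^ ℓ := by ring
          have hpow : (1:ℝ) ≤ 2 ^ ℓ := by
            have := pow_le_pow_right₀ (by norm_num : (1:ℝ) ≤ 2) (Nat.zero_le ℓ)
            simpa using this
          rw [he]
          linarith [hP ℓ]
        have h3 := Real.log_le_log (by exact_mod_cast h) h2
        rwa [Real.log_pow, Nat.cast_add, Nat.cast_ofNat] at h3
    have hl3 : (ℓ:ℝ) + 2 ≤ 3 * ℓ := by
      have : (1:ℝ) ≤ ℓ := by exact_mod_cast hℓ
      linarith
    nlinarith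
  have hu0 : ∀ ℓ : ℕ, 0 ≤ Real.log (N ℓ) / (ℓ * Real.log 2) := by
    intro ℓ
    apply div_nonneg _ (by positivity)
    rcases Nat.eq_zero_or_pos (N ℓ) with h | h
    · simp [h]
    · exact Real.log_nonneg (by exact_mod_cast h)
  have hv0 : ∀ ℓ : ℕ, 0 ≤ Real.log (M ℓ) / (ℓ * Real.log 2) := by
    intro ℓ
    apply div_nonneg _ (by positivity)
    exact Real.log_nonneg (by exact_mod_cast hb ℓ)
  have hev : ∀ ε : ℝ, 0 < ε → ∀ᶠ ℓ : ℕ in atTop,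
      Real.log (N ℓ) / (ℓ * Real.log 2) ≤ Real.log (M ℓ) / (ℓ * Real.log 2) + ε := by
    intro ε hε
    rw [eventually_atTop]
    refine ⟨⌈Real.log 5 / (ε * Real.log 2)⌉₊ + 1, fun ℓ hℓ => ?_⟩
    have hℓ1 : 1 ≤ ℓ := le_trans (Nat.le_add_left 1 _) hℓ
    have hden : (0:ℝ) < ℓ * Real.log 2 := mul_pos (by exact_mod_cast hℓ1) hlog2
    have hMpos : (0:ℝ) < (M ℓ : ℝ) := by exact_mod_cast hb ℓ
    have hlogle : Real.log (N ℓ) ≤ Real.log 5 + Real.log (M ℓ) := by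
      rcases Nat.eq_zero_or_pos (N ℓ) with h | h
      · rw [h]
        push_cast
        rw [Real.log_zero]
        have h5 : (0:ℝ) ≤ Real.log 5 := Real.log_nonneg (by norm_num)
        have h6 : (0:ℝ) ≤ Real.log (M ℓ) := Real.log_nonneg (by exact_mod_cast hb ℓ)
        linarith
      · have h2 : Real.log (N ℓ) ≤ Real.log ((5 * M ℓ : ℕ) : ℝ) :=
          Real.log_le_log (by exact_mod_cast h) (by exact_mod_cast hc ℓ)
        have h3 : ((5 * M ℓ : ℕ) : ℝ) = 5 * (M ℓ : ℝ) := by push_cast; ring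
        rw [h3, Real.log_mul (by norm_num) (ne_of_gt hMpos)] at h2
        exact h2
    have h5 : Real.log 5 / (ℓ * Real.log 2) ≤ ε := by
      rw [div_le_iff₀ hden]
      have hceil := Nat.le_ceil (Real.log 5 / (ε * Real.log 2))
      have hcast : ((⌈Real.log 5 / (ε * Real.log 2)⌉₊ : ℕ) : ℝ) ≤ (ℓ : ℝ) := by
        exact_mod_cast le_trans (Nat.le_succ _) hℓ
      have hℓ' : Real.log 5 / (ε * Real.log 2) ≤ (ℓ:ℝ) := le_trans hceil hcast
      have hεl : (0:ℝ) < ε * Real.log 2 := mul_pos hε hlog2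
      rw [div_le_iff₀ hεl] at hℓ'
      nlinarith
    have hstep : Real.log (N ℓ) / (ℓ * Real.log 2) ≤
        Real.log (M ℓ) / (ℓ * Real.log 2) + Real.log 5 / (ℓ * Real.log 2) := by
      rw [← add_div]
      exact div_le_div_of_nonneg_right (by linarith) hden.le
    linarith
  constructor
  · have hstep : ∀ ε : ℝ, 0 < ε →
        Filter.liminf (fun ℓ : ℕ => Real.log (N ℓ) / (ℓ * Real.log 2)) Filter.atTop ≤
          Filter.liminf (fun ℓ : ℕ => Real.log (M ℓ) / (ℓ * Real.log 2)) Filter.atTop + ε := by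
      intro ε hε
      have h1 : Filter.liminf (fun ℓ : ℕ => Real.log (N ℓ) / (ℓ * Real.log 2)) Filter.atTop ≤
          Filter.liminf (fun ℓ : ℕ => Real.log (M ℓ) / (ℓ * Real.log 2) + ε) Filter.atTop := by
        refine liminf_le_liminf (hev ε hε) ?_ ?_
        · exact isBoundedUnder_of ⟨0, hu0⟩
        · exact isCoboundedUnder_ge_of_le atTop (fun ℓ => by linarith [hbound M hvb ℓ] :
            ∀ ℓ : ℕ, Real.log (M ℓ) / (ℓ * Real.log 2) + ε ≤ 3 + ε)
      have h2 : Filter.liminf (fun ℓ : ℕ => Real.log (M ℓ) / (ℓ * Real.log 2) + ε) Filter.atTop =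
          Filter.liminf (fun ℓ : ℕ => Real.log (M ℓ) / (ℓ * Real.log 2)) Filter.atTop + ε :=
        liminf_add_const atTop _ ε (isCoboundedUnder_ge_of_le atTop (hbound M hvb))
          (isBoundedUnder_of ⟨0, hv0⟩)
      linarith
    by_contra hcon
    push_neg at hcon
    have := hstep ((Filter.liminf (fun ℓ : ℕ => Real.log (N ℓ) / (ℓ * Real.log 2)) Filter.atTop -
      Filter.liminf (fun ℓ : ℕ => Real.log (M ℓ) / (ℓ * Real.log 2)) Filter.atTop) / 2)
      (by linarith)
    linarith
  · have hstep : ∀ ε : ℝ, 0 < ε →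
        Filter.limsup (fun ℓ : ℕ => Real.log (N ℓ) / (ℓ * Real.log 2)) Filter.atTop ≤
          Filter.limsup (fun ℓ : ℕ => Real.log (M ℓ) / (ℓ * Real.log 2)) Filter.atTop + ε := by
      intro ε hε
      have h1 : Filter.limsup (fun ℓ : ℕ => Real.log (N ℓ) / (ℓ * Real.log 2)) Filter.atTop ≤
          Filter.limsup (fun ℓ : ℕ => Real.log (M ℓ) / (ℓ * Real.log 2) + ε) Filter.atTop := by
        refine limsup_le_limsup (hev ε hε) ?_ ?_
        · exact isCoboundedUnder_le_of_le atTop hu0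
        · exact isBoundedUnder_of ⟨3 + ε, fun ℓ => by linarith [hbound M hvb ℓ]⟩
      have h2 : Filter.limsup (fun ℓ : ℕ => Real.log (M ℓ) / (ℓ * Real.log 2) + ε) Filter.atTop =
          Filter.limsup (fun ℓ : ℕ => Real.log (M ℓ) / (ℓ * Real.log 2)) Filter.atTop + ε :=
        limsup_add_const atTop _ ε (isBoundedUnder_of ⟨3, hbound M hvb⟩)
          (isCoboundedUnder_le_of_le atTop hv0)
      linarith
    by_contra hcon
    push_neg at hcon
    have := hstep ((Filter.limsup (fun ℓ : ℕ => Real.log (N ℓ) / (ℓ * Real.log 2)) Filter.atTop -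
      Filter.limsup (fun ℓ : ℕ => Real.log (M ℓ) / (ℓ * Real.log 2)) Filter.atTop) / 2)
      (by linarith)
    linarith

end ConvexDimAux

open ConvexDimAux Filter Topology

theorem convex_restriction_gives_monotone_deriv_restriction
    (f f' : ℝ → ℝ)
    (hderiv : ∀ x ∈ Icc (0:ℝ) 1, HasDerivWithinAt f (f' x) (Icc 0 1) x)
    (hcont : ContinuousOn f' (Icc 0 1))
    (A : Set ℝ) (hA : A ⊆ Icc (0:ℝ) 1)
    (hconv : ∀ x₁ ∈ A, ∀ x₂ ∈ A, ∀ x₃ ∈ A, x₁ < x₂ → x₂ < x₃ →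
      0 ≤ ((f x₃ - f x₂) / (x₃ - x₂) - (f x₂ - f x₁) / (x₂ - x₁)) / (x₃ - x₁)) :
    ∃ B ⊆ Icc (0:ℝ) 1, MonotoneOn f' B ∧
      dimH A ≤ dimH B ∧
      lowerMinkowskiDim A ≤ lowerMinkowskiDim B ∧
      upperMinkowskiDim A ≤ upperMinkowskiDim B := by
  classical
  by_cases hsub : A.Subsingleton
  · refine ⟨A, hA, ?_, le_rfl, le_rfl, le_rfl⟩
    intro x hx y hy _
    rw [hsub hx hy]
  obtain ⟨a, ha, b, hb, hab⟩ := Set.not_subsingleton_iff.1 hsub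
  set K := closure A with hKdef
  have hKsub : K ⊆ Icc (0:ℝ) 1 := closure_minimal hA isClosed_Icc
  have hKc : IsClosed K := isClosed_closure
  have hfc : ContinuousOn f (Icc (0:ℝ) 1) := fun x hx => (hderiv x hx).continuousWithinAt
  have hconvA : ∀ x₁ ∈ A, ∀ x₂ ∈ A, ∀ x₃ ∈ A, x₁ < x₂ → x₂ < x₃ →
      slp f x₁ x₂ ≤ slp f x₂ x₃ := by
    intro p hp q hq r hr h1 h2
    have h3 : (0:ℝ) < r - p := by linarith
    have h4 := hconv p hp q hq r hr h1 h2
    have h5 := mul_nonneg h4 h3.le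
    rw [div_mul_cancel₀ _ (ne_of_gt h3)] at h5
    unfold slp
    linarith
  have hslK := slope_mono_closure f hfc A hA hconvA
  set Astar : Set ℝ := {x | x ∈ K ∧ x ∈ closure (K \ {x})} with hAstarDef
  set Ξ : Set ℝ := {ξ | ∃ c d, c ∈ K ∧ d ∈ K ∧ c < d ∧ Ioo c d ∩ K = ∅ ∧
    ξ ∈ Ioo c d ∧ f' ξ = slp f c d} with hXiDef
  set B := Astar ∪ Ξ with hBdef
  have hBsub : B ⊆ Icc (0:ℝ) 1 := by
    rintro x (hx | ⟨c, d, hcK, hdK, hcd, hgap, hmem, heq⟩)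
    · exact hKsub hx.1
    · exact ⟨le_trans (hKsub hcK).1 hmem.1.le, le_trans hmem.2.le (hKsub hdK).2⟩
  have hchain : ∀ p q r s : ℝ, p ∈ K → q ∈ K → r ∈ K → s ∈ K → p < q → q ≤ r → r < s →
      slp f p q ≤ slp f r s := by
    intro p q r s hp hq hr hs hpq hqr hrs
    rcases eq_or_lt_of_le hqr with rfl | h
    · exact hslK p hp q hq s hs hpq hrs
    · exact le_trans (hslK p hp q hq r hr hpq h) (hslK q hq r hr s hs h hrs)
  have hmono : MonotoneOn f' B := by
    intro u hu v hv huv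
    rcases eq_or_lt_of_le huv with rfl | hlt
    · exact le_rfl
    rcases hu with huA | ⟨c, d, hcK, hdK, hcd, hgap, humem, hueq⟩
    · rcases hv with hvA | ⟨p, q, hpK, hqK, hpq, hgap', hvmem, hveq⟩
      · have h1 : f' u ≤ slp f u v :=
          deriv_le_slope f f' hderiv hKsub hslK huA.1 huA.2 hvA.1 hlt
        have h2 : slp f u v ≤ f' v :=
          slope_le_deriv f f' hderiv hKsub hslK huA.1 hvA.1 hvA.2 hlt
        linarith
      · have huc : u ≤ p := by
          by_contra huc
          push_neg at huc
          have hmem2 : u ∈ Ioo p q ∩ K := ⟨⟨huc, lt_trans hlt hvmem.2⟩, huA.1⟩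
          rw [hgap'] at hmem2
          exact hmem2
        rw [hveq]
        rcases eq_or_lt_of_le huc with rfl | hult
        · exact deriv_le_slope f f' hderiv hKsub hslK huA.1 huA.2 hqK hpq
        · have h1 : f' u ≤ slp f u p :=
            deriv_le_slope f f' hderiv hKsub hslK huA.1 huA.2 hpK hult
          have h2 : slp f u p ≤ slp f p q := hslK u huA.1 p hpK q hqK hult hpq
          linarith
    · rcases hv with hvA | ⟨p, q, hpK, hqK, hpq, hgap', hvmem, hveq⟩
      · have hvd : d ≤ v := by
          by_contra hvd
          push_neg at hvd
          have hmem2 : v ∈ Ioo c d ∩ K := ⟨⟨lt_trans humem.1 hlt, hvd⟩, hvA.1⟩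
          rw [hgap] at hmem2
          exact hmem2
        rw [hueq]
        rcases eq_or_lt_of_le hvd with rfl | hdlt
        · exact slope_le_deriv f f' hderiv hKsub hslK hcK hvA.1 hvA.2 hcd
        · have h2 : slp f c d ≤ slp f d v := hslK c hcK d hdK v hvA.1 hcd hdlt
          have h3 : slp f d v ≤ f' v :=
            slope_le_deriv f f' hderiv hKsub hslK hdK hvA.1 hvA.2 hdlt
          linarith
      · rw [hueq, hveq]
        by_cases h1 : d ≤ p
        · exact hchain c d p q hcK hdK hpK hqK hcd h1 hpq
        push_neg at h1
        by_cases h2 : q ≤ c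
        · exfalso
          have hvq := hvmem.2
          have hcu := humem.1
          linarith
        push_neg at h2
        have hpc : p ≤ c := by
          by_contra h3
          push_neg at h3
          have hmem2 : p ∈ Ioo c d ∩ K := ⟨⟨h3, h1⟩, hpK⟩
          rw [hgap] at hmem2
          exact hmem2
        have hcp : c ≤ p := by
          by_contra h3
          push_neg at h3
          have hmem2 : c ∈ Ioo p q ∩ K := ⟨⟨h3, h2⟩, hcK⟩
          rw [hgap'] at hmem2
          exact hmem2
        have hcpe : c = p := le_antisymm hcp hpc
        have hdq : d ≤ q := by
          by_contra h3
          push_neg at h3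
          have hmem2 : q ∈ Ioo c d ∩ K := ⟨⟨h2, h3⟩, hqK⟩
          rw [hgap] at hmem2
          exact hmem2
        have hqd : q ≤ d := by
          by_contra h3
          push_neg at h3
          have hmem2 : d ∈ Ioo p q ∩ K := ⟨⟨h1, h3⟩, hdK⟩
          rw [hgap'] at hmem2
          exact hmem2
        rw [hcpe, le_antisymm hdq hqd]
  have hBne : B.Nonempty := by
    have key : ∀ x y : ℝ, x ∈ A → y ∈ A → x < y → B.Nonempty := by
      intro x y hx hy hxy
      have hxK : x ∈ K := subset_closure hx
      have hyK : y ∈ K := subset_closure hy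
      by_cases hacc : x ∈ closure (K \ {x})
      · exact ⟨x, Or.inl ⟨hxK, hacc⟩⟩
      · obtain ⟨d, hdK, hxd, hgap⟩ := right_gap hKc hxK hacc hyK hxy
        obtain ⟨ξ, hξmem, hξeq⟩ := gap_mvt f f' hderiv (hKsub hxK) (hKsub hdK) hxd
        exact ⟨ξ, Or.inr ⟨x, d, hxK, hdK, hxd, hgap, hξmem, hξeq⟩⟩
    rcases lt_or_gt_of_ne hab with h | h
    · exact key a b ha hb h
    · exact key b a hb ha h
  have hKne : K.Nonempty := ⟨a, subset_closure ha⟩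
  have hKcpt : IsCompact K := isCompact_Icc.of_isClosed_subset hKc hKsub
  have hgapB : ∀ x ∈ K, x ∉ B → x ≠ sSup K → ∃ ξ ∈ B, x < ξ ∧ Ioc x ξ ∩ K = ∅ := by
    intro x hxK hxB hxM
    have hacc : x ∉ closure (K \ {x}) := fun hacc => hxB (Or.inl ⟨hxK, hacc⟩)
    have hMK : sSup K ∈ K := hKcpt.sSup_mem hKne
    have hbdd : BddAbove K := ⟨1, fun z hz => (hKsub hz).2⟩
    have hxlt : x < sSup K := lt_of_le_of_ne (le_csSup hbdd hxK) hxM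
    obtain ⟨d, hdK, hxd, hgap⟩ := right_gap hKc hxK hacc hMK hxlt
    obtain ⟨ξ, hξmem, hξeq⟩ := gap_mvt f f' hderiv (hKsub hxK) (hKsub hdK) hxd
    refine ⟨ξ, Or.inr ⟨x, d, hxK, hdK, hxd, hgap, hξmem, hξeq⟩, hξmem.1, ?_⟩
    have hsub2 : Ioc x ξ ∩ K ⊆ Ioo x d ∩ K :=
      fun z hz => ⟨⟨hz.1.1, lt_of_le_of_lt hz.1.2 hξmem.2⟩, hz.2⟩
    rw [hgap] at hsub2
    exact eq_empty_of_subset_empty hsub2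
  have hcount : ∀ ℓ, gridCount ℓ A ≤ 5 * gridCount ℓ B := by
    intro ℓ
    have h1 : gridCount ℓ A ≤ gridCount ℓ K := gridCount_mono subset_closure hKsub
    have h2 := count_bound hKsub hBsub hgapB ℓ
    have h3 := gridCount_pos (ℓ := ℓ) hBne hBsub
    omega
  have hdims := seq_dims_le (fun ℓ => gridCount ℓ A) (fun ℓ => gridCount ℓ B)
    (fun ℓ => gridCount_le ℓ hA) (fun ℓ => gridCount_le ℓ hBsub) hcount
    (fun ℓ => gridCount_pos hBne hBsub)
  have hdimH : dimH A ≤ dimH B := by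
    obtain ⟨V, D, hVct, hDperf, hVD⟩ := exists_countable_union_perfect_of_isClosed hKc
    have hDB : D ⊆ B := by
      intro x hx
      have hxK : x ∈ K := by rw [hVD]; exact Or.inr hx
      refine Or.inl ⟨hxK, ?_⟩
      have hacc := hDperf.acc x hx
      rw [accPt_iff_nhds] at hacc
      rw [mem_closure_iff_nhds]
      intro t ht
      obtain ⟨y, ⟨hyt, hyD⟩, hyne⟩ := hacc t ht
      refine ⟨y, hyt, ⟨?_, hyne⟩⟩
      rw [hVD]
      exact Or.inr hyD
    calc dimH A ≤ dimH K := dimH_mono subset_closure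
      _ = max (dimH V) (dimH D) := by rw [hVD, dimH_union]
      _ ≤ dimH B := by
          apply max_le
          · rw [hVct.dimH_zero]
            exact zero_le
          · exact dimH_mono hDB
  exact ⟨B, hBsub, hmono, hdimH, hdims.1, hdims.2⟩
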